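/- Let M be an ordered matching in a simple graph G with free parameter set A and partner set B. If B is an independent set of G, then every M-alternating path whose first edge and last edge both lie in M is a simple path (all of its vertices are distinct). -/

import Mathlib

open SimpleGraph

namespace DS

variable {V : Type*}

/-- The set of edges of a matching presented by the endpoint functions `u`, `v`. -/
def omEdges {s : ℕ} (u v : Fin s → V) : Set (Sym2 V) := {e | ∃ i, e = s(u i, v i)}

/-- `(u, v)` describes a matching of size `s` in `G`: the `2s` endpoints are pairwise
distinct (so the edges are pairwise disjoint) and each pair `{u i, v i}` is an edge. -/
def IsMatchingPair (G : SimpleGraph V) {s : ℕ} (u v : Fin s → V) : Prop :=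
  Function.Injective (Sum.elim u v) ∧ ∀ i, G.Adj (u i) (v i)

/-- `(u, v)` describes an ordered matching: a matching such that `{u 1, …, u s}` is an
independent set and `{u i, v j} ∈ E(G)` implies `i ≤ j`. -/
def IsOrderedMatching (G : SimpleGraph V) {s : ℕ} (u v : Fin s → V) : Prop :=
  IsMatchingPair G u v ∧ (∀ i j, ¬ G.Adj (u i) (u j)) ∧
    ∀ i j, G.Adj (u i) (v j) → i ≤ j

/-- The matching number of `G`. -/
noncomputable def nu (G : SimpleGraph V) : ℕ :=
  sSup {s | ∃ u v : Fin s → V, IsMatchingPair G u v}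

/-- The ordered matching number of `G`. -/
noncomputable def nu0 (G : SimpleGraph V) : ℕ :=
  sSup {s | ∃ u v : Fin s → V, IsOrderedMatching G u v}

/-- A walk is `M`-alternating if its edges are alternately in `M` and not in `M`. -/
def IsAlt {G : SimpleGraph V} (M : Set (Sym2 V)) {a b : V} (w : G.Walk a b) : Prop :=
  List.Chain' (fun e f => (e ∈ M ↔ f ∉ M)) w.edges

/-- The walk `w` is nonempty and its first and last edges belong to `M`. -/
def FirstLastInM {G : SimpleGraph V} (M : Set (Sym2 V)) {a b : V} (w : G.Walk a b) : Prop :=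
  ∃ h : w.edges ≠ [], w.edges.head h ∈ M ∧ w.edges.getLast h ∈ M

/-- `w` is an `M`-admissible path for the vertex `x` (with respect to the ordered matching
presented by `(u, v)`): an `M`-alternating path with origin `x` whose first and last
edges are in `M`, each of whose edges has an end in `A = range u` and an end in
`B = range v`. -/
def IsAdmissible {G : SimpleGraph V} {s : ℕ} (u v : Fin s → V) {a b : V}
    (w : G.Walk a b) (x : V) : Prop :=
  a = x ∧ IsAlt (omEdges u v) w ∧ FirstLastInM (omEdges u v) w ∧
    ∀ e ∈ w.edges, ∃ i j, e = s(u i, v j)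

/-- `ℓ(x)`: the length of a longest `M`-admissible path for `x`. -/
noncomputable def ellv (G : SimpleGraph V) {s : ℕ} (u v : Fin s → V) (x : V) : ℕ :=
  sSup {n | ∃ (b : V) (w : G.Walk x b), IsAdmissible u v w x ∧ w.length = n}

/-- `ℓ(M)`: the length of a longest `M`-alternating path in `G`. -/
noncomputable def ellM (G : SimpleGraph V) (M : Set (Sym2 V)) : ℕ :=
  sSup {n | ∃ (a b : V) (w : G.Walk a b), IsAlt M w ∧ w.length = n}

/-- `ℓ₀(M) = max {ℓ(x) : x ∈ B}`. -/
noncomputable def ell0 (G : SimpleGraph V) {s : ℕ} (u v : Fin s → V) : ℕ :=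
  sSup {n | ∃ i : Fin s, ellv G u v (v i) = n}

/-- `ℓ₁(M) = max {ℓ(x) + ℓ(y) + 1 : {x, y} ∈ E(G[B])}` (with the convention that this
is `0` when `B` is independent, since `sSup ∅ = 0`). -/
noncomputable def ell1 (G : SimpleGraph V) {s : ℕ} (u v : Fin s → V) : ℕ :=
  sSup {n | ∃ i j : Fin s, G.Adj (v i) (v j) ∧ ellv G u v (v i) + ellv G u v (v j) + 1 = n}

/-- `ℓ(G) = min {ℓ(M) : M a maximum ordered matching of G}`. -/
noncomputable def ellG (G : SimpleGraph V) : ℕ :=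
  sInf {n | ∃ u v : Fin (nu0 G) → V, IsOrderedMatching G u v ∧ ellM G (omEdges u v) = n}

open MvPolynomial in
/-- The `n`-th symbolic power `J(G)^{(n)} = ⋂_{{u,v} ∈ E(G)} (x_u, x_v)^n` of the cover
ideal of `G`. -/
noncomputable def symbPow (K : Type*) [Field K] (G : SimpleGraph V) (n : ℕ) :
    Ideal (MvPolynomial V K) :=
  ⨅ (p : V × V) (_ : G.Adj p.1 p.2), (Ideal.span {X p.1, X p.2}) ^ n

/-- The cover ideal `J(G) = ⋂_{{u,v} ∈ E(G)} (x_u, x_v)`. -/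
noncomputable def coverIdeal (K : Type*) [Field K] (G : SimpleGraph V) :
    Ideal (MvPolynomial V K) :=
  symbPow K G 1

/-- `depth R/I`: the length of a maximal `R/I`-regular sequence contained in the maximal
homogeneous ideal `(x_1, …, x_r)` of `R = K[x_1, …, x_r]`. -/
noncomputable def depthQ (K : Type*) [Field K] (I : Ideal (MvPolynomial V K)) : ℕ :=
  sSup {n | ∃ rs : List (MvPolynomial V K), rs.length = n ∧
    (∀ f ∈ rs, f ∈ Ideal.span (Set.range (MvPolynomial.X : V → MvPolynomial V K))) ∧
    RingTheory.Sequence.IsRegular (MvPolynomial V K ⧸ I) rs}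

/-- The stability index of the symbolic depth function of `J(G)`:
`sdst(J(G)) = min {n₀ ≥ 1 : depth R/J(G)^{(n)} = r − ν₀(G) − 1 for all n ≥ n₀}`. -/
noncomputable def sdst (K : Type*) [Field K] [Fintype V] (G : SimpleGraph V) : ℕ :=
  sInf {n0 | 1 ≤ n0 ∧ ∀ n, n0 ≤ n →
    depthQ K (symbPow K G n) = Fintype.card V - nu0 G - 1}

/-- The stability index of the depth function of `J(G)`:
the least `n₀ ≥ 1` such that `depth R/J(G)^n` is constant for `n ≥ n₀` (hence equal to
its limit value). -/
noncomputable def dst (K : Type*) [Field K] [Fintype V] (G : SimpleGraph V) : ℕ :=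
  sInf {n0 | 1 ≤ n0 ∧ ∀ m n, n0 ≤ m → n0 ≤ n →
    depthQ K (coverIdeal K G ^ m) = depthQ K (coverIdeal K G ^ n)}

end DS

section Aux

variable {V : Type*}

open SimpleGraph

private lemma main_incr (G : SimpleGraph V) {s : ℕ} (u v : Fin s → V)
    (hinj : Function.Injective (Sum.elim u v))
    (hA : ∀ i j, ¬ G.Adj (u i) (u j))
    (hord : ∀ i j, G.Adj (u i) (v j) → i ≤ j) :
    ∀ (n : ℕ) {a b : V} (w : G.Walk a b), w.length ≤ n →
      DS.IsAlt (DS.omEdges u v) w → DS.FirstLastInM (DS.omEdges u v) w →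
      ∀ i : Fin s, a = v i →
      w.support.Nodup ∧ ∀ x ∈ w.support, ∃ k, i ≤ k ∧ (x = u k ∨ x = v k) := by
  have huv : ∀ i j, u i ≠ v j := fun i j h => by
    simpa using hinj (show Sum.elim u v (Sum.inl i) = Sum.elim u v (Sum.inr j) from h)
  have hvinj : ∀ i j : Fin s, v i = v j → i = j := fun i j h => by
    simpa using hinj (show Sum.elim u v (Sum.inr i) = Sum.elim u v (Sum.inr j) from h)
  have huinj : ∀ i j : Fin s, u i = u j → i = j := fun i j h => by
    simpa using hinj (show Sum.elim u v (Sum.inl i) = Sum.elim u v (Sum.inl j) from h)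
  intro n
  induction n with
  | zero =>
    intro a b w hlen halt hfl i ha
    cases w with
    | nil => obtain ⟨hne, -⟩ := hfl; simp at hne
    | cons h1 rest => simp [SimpleGraph.Walk.length_cons] at hlen
  | succ n ih =>
    intro a b w hlen halt hfl i ha
    subst ha
    obtain ⟨hne, hhead, hlast⟩ := hfl
    cases w with
    | nil => simp at hne
    | @cons _ c _ h1 rest =>
      have he1 : s(v i, c) ∈ DS.omEdges u v := by simpa using hhead
      obtain ⟨j, hj⟩ := he1
      rcases Sym2.eq_iff.mp hj with ⟨hj1, hj2⟩ | ⟨hj1, hj2⟩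
      · exact absurd hj1.symm (huv j i)
      · have hji : i = j := hvinj _ _ hj1
        subst hji
        subst hj2
        cases rest with
        | nil =>
          refine ⟨?_, ?_⟩
          · simp [SimpleGraph.Walk.support_cons]
            exact fun h => huv i i h.symm
          · intro x hx
            simp [SimpleGraph.Walk.support_cons] at hx
            rcases hx with rfl | rfl
            · exact ⟨i, le_rfl, Or.inr rfl⟩
            · exact ⟨i, le_rfl, Or.inl rfl⟩
        | @cons _ d _ h2 rest2 =>
          have he1mem : s(v i, u i) ∈ DS.omEdges u v := ⟨i, Sym2.eq_swap.symm⟩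
          rw [DS.IsAlt, SimpleGraph.Walk.edges_cons, SimpleGraph.Walk.edges_cons] at halt
          obtain ⟨hr12, halt2⟩ := List.isChain_cons_cons.mp halt
          have he2 : s(u i, d) ∉ DS.omEdges u v := hr12.mp he1mem
          cases rest2 with
          | nil =>
            exfalso
            apply he2
            simpa [List.getLast] using hlast
          | @cons _ e _ h3 rest3 =>
            rw [SimpleGraph.Walk.edges_cons] at halt2
            obtain ⟨hr23, halt3⟩ := List.isChain_cons_cons.mp halt2
            have he3 : s(d, e) ∈ DS.omEdges u v := by
              by_contra hn
              exact he2 (hr23.mpr hn)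
            obtain ⟨m, hm⟩ := he3
            rcases Sym2.eq_iff.mp hm with ⟨hd, hee⟩ | ⟨hd, hee⟩
            · exact absurd (hd ▸ h2) (hA i m)
            · subst hd
              have him : i ≤ m := hord i m h2
              have hne_im : i ≠ m := fun h => he2 ⟨i, by rw [← h]⟩
              have hlt : i < m := lt_of_le_of_ne him hne_im
              have hlen' : (SimpleGraph.Walk.cons h3 rest3).length ≤ n := by
                simp [SimpleGraph.Walk.length_cons] at hlen ⊢; omega
              have halt' : DS.IsAlt (DS.omEdges u v) (SimpleGraph.Walk.cons h3 rest3) := by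
                rw [DS.IsAlt, SimpleGraph.Walk.edges_cons]
                exact halt3
              have he3' : s(v m, e) ∈ DS.omEdges u v := ⟨m, hm⟩
              have hfl' : DS.FirstLastInM (DS.omEdges u v) (SimpleGraph.Walk.cons h3 rest3) := by
                refine ⟨by simp, ?_, ?_⟩
                · exact he3'
                · have hgl : ((SimpleGraph.Walk.cons h1 (SimpleGraph.Walk.cons h2
                      (SimpleGraph.Walk.cons h3 rest3))).edges).getLast hne
                      = ((SimpleGraph.Walk.cons h3 rest3).edges).getLast (by simp) := by
                    simp [SimpleGraph.Walk.edges_cons, List.getLast_cons]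
                  exact hgl ▸ hlast
              obtain ⟨hnodup', hbound'⟩ :=
                ih (SimpleGraph.Walk.cons h3 rest3) hlen' halt' hfl' m rfl
              constructor
              · rw [SimpleGraph.Walk.support_cons, SimpleGraph.Walk.support_cons]
                refine List.nodup_cons.mpr ⟨?_, List.nodup_cons.mpr ⟨?_, hnodup'⟩⟩
                · intro hmem
                  rcases List.mem_cons.mp hmem with h | hmem
                  · exact huv i i h.symm
                  · obtain ⟨k, hk, hx⟩ := hbound' _ hmem
                    rcases hx with hx | hx
                    · exact huv k i hx.symm
                    · exact absurd (hvinj _ _ hx) (by omega)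
                · intro hmem
                  obtain ⟨k, hk, hx⟩ := hbound' _ hmem
                  rcases hx with hx | hx
                  · exact absurd (huinj _ _ hx) (by omega)
                  · exact huv i k hx
              · intro x hx
                rw [SimpleGraph.Walk.support_cons, SimpleGraph.Walk.support_cons] at hx
                rcases List.mem_cons.mp hx with rfl | hx
                · exact ⟨i, le_rfl, Or.inr rfl⟩
                · rcases List.mem_cons.mp hx with rfl | hx
                  · exact ⟨i, le_rfl, Or.inl rfl⟩
                  · obtain ⟨k, hk, hx'⟩ := hbound' _ hx
                    exact ⟨k, le_trans him hk, hx'⟩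

end Aux


/-- Let `M` be an ordered matching in `G` with free parameter set `A = range u` and
partner set `B = range v`. If `B` is an independent set, then every `M`-alternating
walk whose first and last edges lie in `M` is a simple path. -/
theorem stmt_1 {V : Type*} [Fintype V] (G : SimpleGraph V) {s : ℕ} (u v : Fin s → V)
    (hM : DS.IsOrderedMatching G u v)
    (hB : ∀ i j : Fin s, ¬ G.Adj (v i) (v j))
    {a b : V} (w : G.Walk a b)
    (halt : DS.IsAlt (DS.omEdges u v) w)
    (hfl : DS.FirstLastInM (DS.omEdges u v) w) :
    w.support.Nodup := by
  obtain ⟨⟨hinj, hadj⟩, hA, hord⟩ := hM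
  have huv : ∀ i j, u i ≠ v j := fun i j h => by
    simpa using hinj (show Sum.elim u v (Sum.inl i) = Sum.elim u v (Sum.inr j) from h)
  obtain ⟨hne, hhead, hlast⟩ := hfl
  cases w with
  | nil => simp
  | @cons _ c _ h1 rest =>
    have he1 : s(a, c) ∈ DS.omEdges u v := by simpa using hhead
    obtain ⟨j, hj⟩ := he1
    rcases Sym2.eq_iff.mp hj with ⟨ha1, -⟩ | ⟨ha1, -⟩
    · -- a = u j : decreasing case, reverse the roles of u and v
      set u2 : Fin s → V := v ∘ Fin.rev with hu2
      set v2 : Fin s → V := u ∘ Fin.rev with hv2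
      have hEq : DS.omEdges u2 v2 = DS.omEdges u v := by
        ext e
        constructor
        · rintro ⟨i, rfl⟩
          exact ⟨Fin.rev i, Sym2.eq_swap.symm⟩
        · rintro ⟨i, rfl⟩
          refine ⟨Fin.rev i, ?_⟩
          simp [hu2, hv2, Fin.rev_rev, Sym2.eq_swap]
      have hinj2 : Function.Injective (Sum.elim u2 v2) := by
        have hcomp : Sum.elim u2 v2 =
            (Sum.elim u v) ∘ (Sum.map Fin.rev Fin.rev) ∘ Sum.swap := by
          funext x; cases x <;> rfl
        rw [hcomp]
        exact hinj.comp ((Sum.map_injective.mpr ⟨Fin.rev_injective, Fin.rev_injective⟩).comp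
          Sum.swap_leftInverse.injective)
      have hA2 : ∀ i j, ¬ G.Adj (u2 i) (u2 j) := fun i j => hB _ _
      have hord2 : ∀ i j, G.Adj (u2 i) (v2 j) → i ≤ j := by
        intro i j h
        have := hord (Fin.rev j) (Fin.rev i) h.symm
        exact Fin.rev_le_rev.mp this
      have halt2 : DS.IsAlt (DS.omEdges u2 v2) (SimpleGraph.Walk.cons h1 rest) := by
        rw [DS.IsAlt]
        have : ∀ e f : Sym2 V, (e ∈ DS.omEdges u2 v2 ↔ f ∉ DS.omEdges u2 v2)
            ↔ (e ∈ DS.omEdges u v ↔ f ∉ DS.omEdges u v) := by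
          intro e f; rw [hEq]
        rw [DS.IsAlt] at halt
        exact List.IsChain.imp (fun e f h => ((this e f).mpr h)) halt
      have hfl2 : DS.FirstLastInM (DS.omEdges u2 v2) (SimpleGraph.Walk.cons h1 rest) :=
        ⟨hne, by rw [hEq]; exact hhead, by rw [hEq]; exact hlast⟩
      have ha2 : a = v2 (Fin.rev j) := by
        simp [hv2, Fin.rev_rev, ha1]
      exact (main_incr G u2 v2 hinj2 hA2 hord2 _ _ le_rfl halt2 hfl2 (Fin.rev j) ha2).1
    · exact (main_incr G u v hinj hA hord _ _ le_rfl halt ⟨hne, hhead, hlast⟩ j ha1).1
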